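/- Let a, b > 0 with ab > 1. If x ≥ (ab)^(a(√(2/log(ab)) + 1)), then x^(1/a) / log x ≥ b. -/

import Mathlib

theorem stmt1 (a b x : ℝ) (ha : 0 < a) (hb : 0 < b) (hab : 1 < a * b) (hx1 : 1 < x)
    (hx : (a * b) ^ (a * (Real.sqrt (2 / Real.log (a * b)) + 1)) ≤ x) :
    b ≤ x ^ (1 / a) / Real.log x := by
  have hab0 : (0:ℝ) < a * b := by positivity
  set L := Real.log (a * b) with hLdef
  have hL0 : 0 < L := Real.log_pos hab
  have hx0 : (0:ℝ) < x := by linarith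
  have hlogx : 0 < Real.log x := Real.log_pos hx1
  rw [le_div_iff₀ hlogx]
  set t := Real.log x / a with htdef
  have hlogxt : Real.log x = a * t := by rw [htdef]; field_simp
  have hxr : x ^ (1/a : ℝ) = Real.exp t := by
    rw [Real.rpow_def_of_pos hx0]
    congr 1
    rw [htdef]; ring
  -- lower bound on log x
  have hlb : a * (Real.sqrt (2 / L) + 1) * L ≤ Real.log x := by
    have := Real.log_le_log (Real.rpow_pos_of_pos hab0 _) hx
    rwa [Real.log_rpow hab0] at this
  -- sqrt(2/L) * L = sqrt(2L)
  have hsqrt : Real.sqrt (2 / L) * L = Real.sqrt (2 * L) := by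
    rw [← Real.sqrt_sq hL0.le, ← Real.sqrt_mul (by positivity)]
    congr 1
    field_simp
    ring
    rw [Real.sq_sqrt (sq_nonneg L)]
  have ht : Real.sqrt (2 * L) + L ≤ t := by
    rw [htdef, le_div_iff₀ ha]
    nlinarith [hlb, hsqrt]
  set s := t - L with hsdef
  have hs0 : 0 ≤ s := by
    have := Real.sqrt_nonneg (2 * L)
    simp only [hsdef]; linarith
  have hs2 : 2 * L ≤ s ^ 2 := by
    have h1 : Real.sqrt (2 * L) ≤ s := by simp only [hsdef]; linarith
    nlinarith [Real.sq_sqrt (by positivity : (0:ℝ) ≤ 2 * L), Real.sqrt_nonneg (2 * L)]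
  have hexp : 1 + s + s ^ 2 / 2 ≤ Real.exp s := Real.quadratic_le_exp_of_nonneg hs0
  have heL : Real.exp L = a * b := Real.exp_log hab0
  have key : (a * b) * t ≤ Real.exp t := by
    have : Real.exp t = Real.exp L * Real.exp s := by
      rw [← Real.exp_add]; congr 1; simp [hsdef]
    rw [this, heL]
    have : t ≤ Real.exp s := by nlinarith
    nlinarith
  rw [hxr, hlogxt]
  nlinarith
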